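/- Let m ∈ ℤ_{≥0} and Im τ > 0, and define φ₁(τ,u,v) = Σ_{j∈ℤ} (−1)^j e^{2πij(2m+1)u + πi(u+v)} q^{(m+1/2)j² + j/2} / (1 − e^{2πi(u+v)} q^j). Then φ₁(τ, u, v) + e^{2πi(m+1/2)(2v−τ)} φ₁(τ, u, v−τ) = Σ_{k=0}^{2m} e^{2πi(k+1/2)v} q^{−(k+1/2)²/(2(2m+1))} Θ⁻_{k+1/2, m+1/2}(τ, 2u), where Θ⁻_{j,m+1/2}(τ,z) = Σ_{n∈ℤ} (−1)ⁿ e^{2πi(m+1/2)z(n + j/(2m+1))} q^{(m+1/2)(n + j/(2m+1))²}. -/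

import Mathlib

noncomputable section

open Complex

/-- The alternate theta function `Θ⁻_{j, m+1/2}(τ,z)` of degree `m + 1/2`,
with `q^x = e^{2πiτx}`. -/
def ThetaB (m : ℕ) (j τ z : ℂ) : ℂ :=
  ∑' n : ℤ,
    (-1 : ℂ) ^ n *
      Complex.exp (2 * (Real.pi : ℂ) * I * ((m : ℂ) + 1 / 2) * z *
        ((n : ℂ) + j / (2 * (m : ℂ) + 1))) *
      Complex.exp (2 * (Real.pi : ℂ) * I * τ * ((m : ℂ) + 1 / 2) *
        ((n : ℂ) + j / (2 * (m : ℂ) + 1)) ^ 2)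

/-- The mock theta series `φ₁^{[B;m]}(τ,u,v)`, with `q^x = e^{2πiτx}`. -/
def PhiB1 (m : ℕ) (τ u v : ℂ) : ℂ :=
  ∑' j : ℤ,
    (-1 : ℂ) ^ j *
      Complex.exp (2 * (Real.pi : ℂ) * I * (j : ℂ) * (2 * (m : ℂ) + 1) * u +
        (Real.pi : ℂ) * I * (u + v)) *
      Complex.exp (2 * (Real.pi : ℂ) * I * τ * (((m : ℂ) + 1 / 2) * (j : ℂ) ^ 2 + (j : ℂ) / 2)) /
      (1 - Complex.exp (2 * (Real.pi : ℂ) * I * (u + v)) *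
        Complex.exp (2 * (Real.pi : ℂ) * I * τ * (j : ℂ)))

namespace Stmt13Aux

def xx (τ u v : ℂ) (j : ℤ) : ℂ :=
  Complex.exp (2 * (Real.pi : ℂ) * I * (u + v)) * Complex.exp (2 * (Real.pi : ℂ) * I * τ * (j : ℂ))

def NN (m : ℕ) (τ u v : ℂ) (j : ℤ) : ℂ :=
  (-1 : ℂ) ^ j *
    Complex.exp (2 * (Real.pi : ℂ) * I * (j : ℂ) * (2 * (m : ℂ) + 1) * u +
      (Real.pi : ℂ) * I * (u + v)) *
    Complex.exp (2 * (Real.pi : ℂ) * I * τ * (((m : ℂ) + 1 / 2) * (j : ℂ) ^ 2 + (j : ℂ) / 2))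

def ff (m : ℕ) (τ u v : ℂ) (j : ℤ) : ℂ := NN m τ u v j / (1 - xx τ u v j)

/-- The summand of `ThetaB m jv τ z` at index `n`. -/
def tb (m : ℕ) (jv τ z : ℂ) (n : ℤ) : ℂ :=
  (-1 : ℂ) ^ n *
    Complex.exp (2 * (Real.pi : ℂ) * I * ((m : ℂ) + 1 / 2) * z *
      ((n : ℂ) + jv / (2 * (m : ℂ) + 1))) *
    Complex.exp (2 * (Real.pi : ℂ) * I * τ * ((m : ℂ) + 1 / 2) *
      ((n : ℂ) + jv / (2 * (m : ℂ) + 1)) ^ 2)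

def TT (m : ℕ) (τ u v : ℂ) (k : ℕ) (j : ℤ) : ℂ :=
  Complex.exp (2 * (Real.pi : ℂ) * I * ((k : ℂ) + 1 / 2) * v) *
    (Complex.exp (-(2 * (Real.pi : ℂ) * I * τ) * ((k : ℂ) + 1 / 2) ^ 2 /
      (2 * (2 * (m : ℂ) + 1))) * tb m ((k : ℂ) + 1 / 2) τ (2 * u) j)

lemma neg_one_zpow_eq (j : ℤ) :
    ((-1 : ℂ)) ^ j = Complex.exp ((j : ℂ) * ((Real.pi : ℂ) * I)) := by
  rw [Complex.exp_int_mul, Complex.exp_pi_mul_I]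

lemma tb_eq (m : ℕ) (jv τ z : ℂ) (n : ℤ) :
    tb m jv τ z n =
      Complex.exp (2 * (Real.pi : ℂ) * I * ((m : ℂ) + 1 / 2) * z * (jv / (2 * (m : ℂ) + 1)) +
          (Real.pi : ℂ) * I * ((2 * (m : ℂ) + 1) * τ) * (jv / (2 * (m : ℂ) + 1)) ^ 2) *
        jacobiTheta₂_term n
          (((m : ℂ) + 1 / 2) * z + (2 * (m : ℂ) + 1) * τ * (jv / (2 * (m : ℂ) + 1)) + 1 / 2)
          ((2 * (m : ℂ) + 1) * τ) := by
  set d : ℂ := jv / (2 * (m : ℂ) + 1) with hd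
  rw [tb, jacobiTheta₂_term, neg_one_zpow_eq, ← Complex.exp_add, ← Complex.exp_add,
    ← Complex.exp_add]
  congr 1
  ring

lemma NN_eq (m : ℕ) (τ u v : ℂ) (j : ℤ) :
    NN m τ u v j = Complex.exp ((Real.pi : ℂ) * I * (u + v)) *
      jacobiTheta₂_term j ((2 * (m : ℂ) + 1) * u + τ / 2 + 1 / 2) ((2 * (m : ℂ) + 1) * τ) := by
  rw [NN, jacobiTheta₂_term, neg_one_zpow_eq, ← Complex.exp_add, ← Complex.exp_add,
    ← Complex.exp_add]
  congr 1
  ring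

lemma him {m : ℕ} {τ : ℂ} (hτ : 0 < τ.im) : 0 < ((2 * (m : ℂ) + 1) * τ).im := by
  rw [show (2 * (m : ℂ) + 1) = ((2 * (m : ℝ) + 1 : ℝ) : ℂ) by push_cast; ring,
    Complex.im_ofReal_mul]
  positivity

lemma aux_norm_summable (z : ℂ) {τ' : ℂ} (h : 0 < τ'.im) :
    Summable fun n : ℤ => ‖jacobiTheta₂_term n z τ'‖ := by
  have hb := summable_pow_mul_jacobiTheta₂_term_bound |z.im| h 0
  simp only [pow_zero, one_mul] at hb
  exact Summable.of_nonneg_of_le (fun _ => norm_nonneg _)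
    (fun n => norm_jacobiTheta₂_term_le h le_rfl le_rfl n) hb

lemma tb_summable (m : ℕ) (jv z : ℂ) {τ : ℂ} (hτ : 0 < τ.im) :
    Summable fun n : ℤ => tb m jv τ z n := by
  have h1 : Summable (jacobiTheta₂_term ·
      (((m : ℂ) + 1 / 2) * z + (2 * (m : ℂ) + 1) * τ * (jv / (2 * (m : ℂ) + 1)) + 1 / 2)
      ((2 * (m : ℂ) + 1) * τ)) :=
    (summable_jacobiTheta₂_term_iff _ _).mpr (him hτ)
  exact (h1.mul_left _).congr fun n => (tb_eq m jv τ z n).symm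

lemma TT_summable (m : ℕ) (τ u v : ℂ) (k : ℕ) (hτ : 0 < τ.im) :
    Summable fun j : ℤ => TT m τ u v k j := by
  exact ((tb_summable m ((k : ℂ) + 1 / 2) (2 * u) hτ).mul_left _).mul_left _

lemma TT_eq (m : ℕ) (τ u v : ℂ) (k : ℕ) (j : ℤ) (h2m1 : (2 * (m : ℂ) + 1) ≠ 0) :
    TT m τ u v k j = NN m τ u v j * xx τ u v j ^ k := by
  have eq1 : -(2 * (Real.pi : ℂ) * I * τ) * ((k : ℂ) + 1 / 2) ^ 2 / (2 * (2 * (m : ℂ) + 1)) =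
      -((Real.pi : ℂ) * I * τ) * (((k : ℂ) + 1 / 2) / (2 * (m : ℂ) + 1)) * ((k : ℂ) + 1 / 2) := by
    field_simp
  have hc : (((k : ℂ) + 1 / 2) / (2 * (m : ℂ) + 1)) * (2 * (m : ℂ) + 1) = ((k : ℂ) + 1 / 2) :=
    div_mul_cancel₀ _ h2m1
  have h1 : TT m τ u v k j = (-1 : ℂ) ^ j * Complex.exp
      (2 * (Real.pi : ℂ) * I * ((k : ℂ) + 1 / 2) * v +
        -((Real.pi : ℂ) * I * τ) * (((k : ℂ) + 1 / 2) / (2 * (m : ℂ) + 1)) * ((k : ℂ) + 1 / 2) +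
        2 * (Real.pi : ℂ) * I * ((m : ℂ) + 1 / 2) * (2 * u) *
          ((j : ℂ) + ((k : ℂ) + 1 / 2) / (2 * (m : ℂ) + 1)) +
        2 * (Real.pi : ℂ) * I * τ * ((m : ℂ) + 1 / 2) *
          ((j : ℂ) + ((k : ℂ) + 1 / 2) / (2 * (m : ℂ) + 1)) ^ 2) := by
    rw [TT, tb, eq1]; simp only [Complex.exp_add]; ring
  have h2 : NN m τ u v j * xx τ u v j ^ k = (-1 : ℂ) ^ j * Complex.exp
      ((2 * (Real.pi : ℂ) * I * (j : ℂ) * (2 * (m : ℂ) + 1) * u +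
        (Real.pi : ℂ) * I * (u + v)) +
        2 * (Real.pi : ℂ) * I * τ * (((m : ℂ) + 1 / 2) * (j : ℂ) ^ 2 + (j : ℂ) / 2) +
        (((k : ℕ) : ℂ) * (2 * (Real.pi : ℂ) * I * (u + v)) +
          ((k : ℕ) : ℂ) * (2 * (Real.pi : ℂ) * I * τ * (j : ℂ)))) := by
    rw [NN, xx, mul_pow, ← Complex.exp_nat_mul, ← Complex.exp_nat_mul]
    simp only [Complex.exp_add]; ring
  rw [h1, h2]
  congr 1
  congr 1
  linear_combination (2 * (Real.pi : ℂ) * I * u + 2 * (Real.pi : ℂ) * I * τ * (j : ℂ) +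
    (Real.pi : ℂ) * I * τ * (((k : ℂ) + 1 / 2) / (2 * (m : ℂ) + 1))) * hc

lemma key_num (m : ℕ) (τ u v : ℂ) (j : ℤ) :
    Complex.exp (2 * (Real.pi : ℂ) * I * ((m : ℂ) + 1 / 2) * (2 * v - τ)) *
      NN m τ u (v - τ) (j + 1) = -(NN m τ u v j * xx τ u v j ^ (2 * m + 1)) := by
  have h1 : Complex.exp (2 * (Real.pi : ℂ) * I * ((m : ℂ) + 1 / 2) * (2 * v - τ)) *
      NN m τ u (v - τ) (j + 1) = (-1 : ℂ) ^ j * -Complex.exp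
      (2 * (Real.pi : ℂ) * I * ((m : ℂ) + 1 / 2) * (2 * v - τ) +
        (2 * (Real.pi : ℂ) * I * ((j + 1 : ℤ) : ℂ) * (2 * (m : ℂ) + 1) * u +
          (Real.pi : ℂ) * I * (u + (v - τ))) +
        2 * (Real.pi : ℂ) * I * τ * (((m : ℂ) + 1 / 2) * ((j + 1 : ℤ) : ℂ) ^ 2 +
          ((j + 1 : ℤ) : ℂ) / 2)) := by
    rw [NN, zpow_add₀ (by norm_num : (-1 : ℂ) ≠ 0) j 1, zpow_one]
    simp only [Complex.exp_add]; ring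
  have h2 : -(NN m τ u v j * xx τ u v j ^ (2 * m + 1)) = (-1 : ℂ) ^ j * -Complex.exp
      ((2 * (Real.pi : ℂ) * I * (j : ℂ) * (2 * (m : ℂ) + 1) * u +
        (Real.pi : ℂ) * I * (u + v)) +
        2 * (Real.pi : ℂ) * I * τ * (((m : ℂ) + 1 / 2) * (j : ℂ) ^ 2 + (j : ℂ) / 2) +
        (((2 * m + 1 : ℕ) : ℂ) * (2 * (Real.pi : ℂ) * I * (u + v)) +
          ((2 * m + 1 : ℕ) : ℂ) * (2 * (Real.pi : ℂ) * I * τ * (j : ℂ)))) := by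
    rw [NN, xx, mul_pow, ← Complex.exp_nat_mul, ← Complex.exp_nat_mul]
    simp only [Complex.exp_add]; ring
  have h3 : (2 * (Real.pi : ℂ) * I * ((m : ℂ) + 1 / 2) * (2 * v - τ) +
        (2 * (Real.pi : ℂ) * I * ((j + 1 : ℤ) : ℂ) * (2 * (m : ℂ) + 1) * u +
          (Real.pi : ℂ) * I * (u + (v - τ))) +
        2 * (Real.pi : ℂ) * I * τ * (((m : ℂ) + 1 / 2) * ((j + 1 : ℤ) : ℂ) ^ 2 +
          ((j + 1 : ℤ) : ℂ) / 2)) =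
      ((2 * (Real.pi : ℂ) * I * (j : ℂ) * (2 * (m : ℂ) + 1) * u +
        (Real.pi : ℂ) * I * (u + v)) +
        2 * (Real.pi : ℂ) * I * τ * (((m : ℂ) + 1 / 2) * (j : ℂ) ^ 2 + (j : ℂ) / 2) +
        (((2 * m + 1 : ℕ) : ℂ) * (2 * (Real.pi : ℂ) * I * (u + v)) +
          ((2 * m + 1 : ℕ) : ℂ) * (2 * (Real.pi : ℂ) * I * τ * (j : ℂ)))) := by
    push_cast; ring
  rw [h1, h3, h2]

lemma key (m : ℕ) (τ u v : ℂ) (j : ℤ) (h2m1 : (2 * (m : ℂ) + 1) ≠ 0)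
    (hx1 : xx τ u v j ≠ 1) :
    ff m τ u v j + Complex.exp (2 * (Real.pi : ℂ) * I * ((m : ℂ) + 1 / 2) * (2 * v - τ)) *
      ff m τ u (v - τ) (j + 1) = ∑ k ∈ Finset.range (2 * m + 1), TT m τ u v k j := by
  have hd : 1 - xx τ u v j ≠ 0 := sub_ne_zero.mpr (Ne.symm hx1)
  have hx1' : xx τ u v j - 1 ≠ 0 := sub_ne_zero.mpr hx1
  have hden : 1 - xx τ u (v - τ) (j + 1) = 1 - xx τ u v j := by
    rw [xx, xx]
    congr 1
    rw [← Complex.exp_add, ← Complex.exp_add]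
    congr 1
    push_cast; ring
  rw [Finset.sum_congr rfl (fun k _ => TT_eq m τ u v k j h2m1), ← Finset.mul_sum,
    geom_sum_eq hx1]
  rw [ff, ff, hden, mul_div_assoc', key_num m τ u v j]
  field_simp
  ring


lemma xx_ne_one (τ u v : ℂ) (hpole : ∀ a b : ℤ, u + v ≠ (a : ℂ) + (b : ℂ) * τ) (j : ℤ) :
    xx τ u v j ≠ 1 := by
  intro hx
  rw [xx, ← Complex.exp_add] at hx
  obtain ⟨n, hn⟩ := Complex.exp_eq_one_iff.mp hx
  refine hpole n (-j) ?_
  have hne : (2 * (Real.pi : ℂ) * I) ≠ 0 :=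
    mul_ne_zero (mul_ne_zero two_ne_zero (Complex.ofReal_ne_zero.mpr Real.pi_ne_zero))
      Complex.I_ne_zero
  apply mul_left_cancel₀ hne
  push_cast
  linear_combination hn

lemma ff_summable (m : ℕ) (τ u v : ℂ) (hτ : 0 < τ.im) : Summable (ff m τ u v) := by
  set w : ℂ := Complex.exp (2 * (Real.pi : ℂ) * I * τ) with hw
  have hxw : ∀ j : ℤ, xx τ u v j = Complex.exp (2 * (Real.pi : ℂ) * I * (u + v)) * w ^ j := by
    intro j
    rw [xx, hw, show 2 * (Real.pi : ℂ) * I * τ * (j : ℂ) = (j : ℂ) * (2 * (Real.pi : ℂ) * I * τ)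
      by ring, Complex.exp_int_mul]
  have hwn : ‖w‖ < 1 := by
    rw [hw, Complex.norm_exp]
    have hre : (2 * (Real.pi : ℂ) * I * τ).re = -(2 * Real.pi * τ.im) := by
      simp [Complex.mul_re, Complex.mul_im]
    rw [hre, Real.exp_lt_one_iff]
    have := Real.pi_pos
    nlinarith
  have hw0 : 0 < ‖w‖ := norm_pos_iff.mpr (Complex.exp_ne_zero _)
  have hR : 0 < ‖Complex.exp (2 * (Real.pi : ℂ) * I * (u + v))‖ :=
    norm_pos_iff.mpr (Complex.exp_ne_zero _)
  have ht : Filter.Tendsto (fun n : ℕ => ‖Complex.exp (2 * (Real.pi : ℂ) * I * (u + v))‖ * ‖w‖ ^ n)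
      Filter.atTop (nhds 0) := by
    simpa using (tendsto_pow_atTop_nhds_zero_of_lt_one (norm_nonneg w) hwn).const_mul
      ‖Complex.exp (2 * (Real.pi : ℂ) * I * (u + v))‖
  have hev1 : ∀ᶠ n : ℕ in Filter.atTop, ‖xx τ u v (n : ℤ)‖ < 1 / 2 := by
    filter_upwards [ht.eventually_lt_const (by norm_num : (0:ℝ) < 1/2)] with n hn
    rw [hxw, norm_mul, norm_zpow, zpow_natCast]
    exact hn
  have hinv : 1 < ‖w‖⁻¹ := one_lt_inv_iff₀.mpr ⟨hw0, hwn⟩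
  have ht2 : Filter.Tendsto
      (fun n : ℕ => ‖Complex.exp (2 * (Real.pi : ℂ) * I * (u + v))‖ * (‖w‖⁻¹) ^ n)
      Filter.atTop Filter.atTop :=
    (tendsto_pow_atTop_atTop_of_one_lt hinv).const_mul_atTop hR
  have hev2 : ∀ᶠ n : ℕ in Filter.atTop, 2 ≤ ‖xx τ u v (-(n : ℤ))‖ := by
    filter_upwards [ht2.eventually_ge_atTop 2] with n hn
    rw [hxw, norm_mul, norm_zpow, zpow_neg, zpow_natCast, ← inv_pow]
    exact hn
  have hNn : Summable fun j : ℤ => ‖NN m τ u v j‖ := by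
    have h1 := (aux_norm_summable ((2 * (m : ℂ) + 1) * u + τ / 2 + 1 / 2) (him (m := m) hτ)).mul_left
      ‖Complex.exp ((Real.pi : ℂ) * I * (u + v))‖
    exact h1.congr fun j => by rw [NN_eq m τ u v j, norm_mul]
  apply Summable.of_nat_of_neg
  · apply Summable.of_norm_bounded_eventually_nat (g := fun n : ℕ => 2 * ‖NN m τ u v (n : ℤ)‖)
    · exact (hNn.comp_injective fun a b h => by exact_mod_cast h).mul_left 2
    · filter_upwards [hev1] with n hn
      have hdl : (1:ℝ)/2 ≤ ‖1 - xx τ u v (n : ℤ)‖ := by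
        have h := norm_sub_norm_le (1 : ℂ) (xx τ u v (n : ℤ))
        rw [norm_one] at h
        linarith
      rw [ff, norm_div, div_le_iff₀ (by linarith)]
      nlinarith [norm_nonneg (NN m τ u v (n : ℤ))]
  · apply Summable.of_norm_bounded_eventually_nat (g := fun n : ℕ => 2 * ‖NN m τ u v (-(n : ℤ))‖)
    · exact (hNn.comp_injective fun a b h => by exact_mod_cast neg_inj.mp h).mul_left 2
    · filter_upwards [hev2] with n hn
      have hdl : (1:ℝ) ≤ ‖1 - xx τ u v (-(n : ℤ))‖ := by
        have h := norm_sub_norm_le (xx τ u v (-(n : ℤ))) (1 : ℂ)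
        rw [norm_one, norm_sub_rev] at h
        linarith
      rw [ff, norm_div, div_le_iff₀ (by linarith)]
      nlinarith [norm_nonneg (NN m τ u v (-(n : ℤ)))]


lemma phi_eq (m : ℕ) (τ u v : ℂ) : PhiB1 m τ u v = ∑' j : ℤ, ff m τ u v j := rfl

lemma theta_eq (m : ℕ) (jv τ z : ℂ) : ThetaB m jv τ z = ∑' n : ℤ, tb m jv τ z n := rfl

end Stmt13Aux

open Stmt13Aux
theorem stmt13 (m : ℕ) (τ u v : ℂ) (hτ : 0 < τ.im)
    (hpole : ∀ a b : ℤ, u + v ≠ (a : ℂ) + (b : ℂ) * τ) :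
    PhiB1 m τ u v +
        Complex.exp (2 * (Real.pi : ℂ) * I * ((m : ℂ) + 1 / 2) * (2 * v - τ)) *
          PhiB1 m τ u (v - τ) =
      ∑ k ∈ Finset.range (2 * m + 1),
        Complex.exp (2 * (Real.pi : ℂ) * I * ((k : ℂ) + 1 / 2) * v) *
          Complex.exp (-(2 * (Real.pi : ℂ) * I * τ) * ((k : ℂ) + 1 / 2) ^ 2 /
            (2 * (2 * (m : ℂ) + 1))) *
          ThetaB m ((k : ℂ) + 1 / 2) τ (2 * u) := by
  have h2m1 : (2 * (m : ℂ) + 1) ≠ 0 := by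
    have h : ((2 * m + 1 : ℕ) : ℂ) ≠ 0 := Nat.cast_ne_zero.mpr (by omega)
    push_cast at h
    exact h
  have hx1 := xx_ne_one τ u v hpole
  have hffs := ff_summable m τ u v hτ
  have hTs : ∀ k : ℕ, Summable fun j : ℤ => TT m τ u v k j := fun k =>
    TT_summable m τ u v k hτ
  have hkey : ∀ j : ℤ, ff m τ u v j +
      Complex.exp (2 * (Real.pi : ℂ) * I * ((m : ℂ) + 1 / 2) * (2 * v - τ)) *
        ff m τ u (v - τ) (j + 1) = ∑ k ∈ Finset.range (2 * m + 1), TT m τ u v k j :=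
    fun j => key m τ u v j h2m1 (hx1 j)
  have hgs : Summable fun j : ℤ =>
      Complex.exp (2 * (Real.pi : ℂ) * I * ((m : ℂ) + 1 / 2) * (2 * v - τ)) *
        ff m τ u (v - τ) (j + 1) := by
    have he : ∀ j : ℤ,
        Complex.exp (2 * (Real.pi : ℂ) * I * ((m : ℂ) + 1 / 2) * (2 * v - τ)) *
          ff m τ u (v - τ) (j + 1) =
        (∑ k ∈ Finset.range (2 * m + 1), TT m τ u v k j) - ff m τ u v j := fun j => by
      rw [← hkey j]; ring
    exact ((summable_sum fun k _ => hTs k).sub hffs).congr fun j => (he j).symm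
  have hre : PhiB1 m τ u (v - τ) = ∑' j : ℤ, ff m τ u (v - τ) (j + 1) :=
    ((Equiv.addRight (1 : ℤ)).tsum_eq (ff m τ u (v - τ))).symm
  calc PhiB1 m τ u v +
      Complex.exp (2 * (Real.pi : ℂ) * I * ((m : ℂ) + 1 / 2) * (2 * v - τ)) *
        PhiB1 m τ u (v - τ)
      = (∑' j : ℤ, ff m τ u v j) + ∑' j : ℤ,
          Complex.exp (2 * (Real.pi : ℂ) * I * ((m : ℂ) + 1 / 2) * (2 * v - τ)) *
            ff m τ u (v - τ) (j + 1) := by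
        rw [phi_eq, hre, ← tsum_mul_left]
    _ = ∑' j : ℤ, (ff m τ u v j +
          Complex.exp (2 * (Real.pi : ℂ) * I * ((m : ℂ) + 1 / 2) * (2 * v - τ)) *
            ff m τ u (v - τ) (j + 1)) := (Summable.tsum_add hffs hgs).symm
    _ = ∑' j : ℤ, ∑ k ∈ Finset.range (2 * m + 1), TT m τ u v k j := tsum_congr hkey
    _ = ∑ k ∈ Finset.range (2 * m + 1), ∑' j : ℤ, TT m τ u v k j :=
        Summable.tsum_finsetSum fun k _ => hTs k
    _ = ∑ k ∈ Finset.range (2 * m + 1),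
        Complex.exp (2 * (Real.pi : ℂ) * I * ((k : ℂ) + 1 / 2) * v) *
          Complex.exp (-(2 * (Real.pi : ℂ) * I * τ) * ((k : ℂ) + 1 / 2) ^ 2 /
            (2 * (2 * (m : ℂ) + 1))) *
          ThetaB m ((k : ℂ) + 1 / 2) τ (2 * u) := by
        refine Finset.sum_congr rfl fun k _ => ?_
        simp only [TT]
        rw [tsum_mul_left, tsum_mul_left, ← mul_assoc, theta_eq]
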